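/- arXiv:1104.2281 — 2 statements merged into one kernel-verified Lean document; each statement's English description precedes it below -/
import Mathlib

section
/- Let m ≥ 1, let A be an m×m complex matrix and let λ₁,…,λ_m be pairwise distinct complex numbers such that the characteristic polynomial of A equals ∏_{j=1}^m (X − λ_j). Fix j and let ρ > 0 satisfy ρ < |λ_h − λ_j| for all h ≠ j. Then the matrix z·I − A is invertible for every z on the circle |z − λ_j| = ρ, and (1/(2πi)) ∮_{|z−λ_j|=ρ} (z·I − A)^{-1} dz = ∏_{h≠j} (λ_j − λ_h)^{-1}·(A − λ_h·I). -/
open Polynomial Matrix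

attribute [local instance] Matrix.normedAddCommGroup Matrix.normedSpace

lemma det_smul_one_sub_eq_eval_charpoly {m : ℕ} (A : Matrix (Fin m) (Fin m) ℂ) (z : ℂ) :
    (z • (1 : Matrix (Fin m) (Fin m) ℂ) - A).det = A.charpoly.eval z := by
  rw [Matrix.charpoly, ← Polynomial.coe_evalRingHom, RingHom.map_det]
  congr 1
  ext i k
  by_cases h : i = k <;>
    simp [h, Matrix.charmatrix_apply, Matrix.map_apply, Matrix.one_apply, Matrix.sub_apply,
      Matrix.smul_apply, Matrix.diagonal_apply]

/-- The Riesz projection of a matrix with simple spectrum, given by the contour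
integral of the resolvent around a single eigenvalue, equals the Lagrange
spectral projection. -/
theorem stmt_2 (m : ℕ) (hm : 1 ≤ m) (A : Matrix (Fin m) (Fin m) ℂ) (lam : Fin m → ℂ)
    (hdist : Function.Injective lam)
    (hchar : A.charpoly = ∏ j : Fin m, (X - C (lam j)))
    (j : Fin m) (ρ : ℝ) (hρ : 0 < ρ)
    (hsep : ∀ h : Fin m, h ≠ j → ρ < ‖lam h - lam j‖) :
    (∀ z : ℂ, ‖z - lam j‖ = ρ →
        IsUnit (z • (1 : Matrix (Fin m) (Fin m) ℂ) - A)) ∧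
    (2 * (Real.pi : ℂ) * Complex.I)⁻¹ •
        (∮ z in C(lam j, ρ), (z • (1 : Matrix (Fin m) (Fin m) ℂ) - A)⁻¹) =
      Polynomial.aeval A
        (∏ h ∈ Finset.univ.erase j, (C ((lam j - lam h)⁻¹) * (X - C (lam h)))) := by
  have : Nonempty (Fin m) := ⟨⟨0, hm⟩⟩
  -- points on the circle are not eigenvalues
  have hcirc : ∀ z : ℂ, ‖z - lam j‖ = ρ → ∀ k, z ≠ lam k := by
    intro z hz k hk
    subst hk
    rcases eq_or_ne k j with rfl | hkj
    · simp at hz; exact hρ.ne' hz.symm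
    · exact absurd hz (by have := hsep k hkj; exact fun h => by rw [h] at this; exact lt_irrefl _ this)
  have hunit : ∀ z : ℂ, ‖z - lam j‖ = ρ →
      IsUnit (z • (1 : Matrix (Fin m) (Fin m) ℂ) - A) := by
    intro z hz
    rw [Matrix.isUnit_iff_isUnit_det, det_smul_one_sub_eq_eval_charpoly, hchar, eval_prod,
      isUnit_iff_ne_zero]
    refine Finset.prod_ne_zero_iff.2 fun k _ => ?_
    simp only [eval_sub, eval_X, eval_C]
    exact sub_ne_zero.2 (hcirc z hz k)
  refine ⟨hunit, ?_⟩
  -- the Lagrange projections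
  set P : Fin m → Matrix (Fin m) (Fin m) ℂ :=
    fun k => aeval A (Lagrange.basis Finset.univ lam k) with hP
  have hsum : ∑ k, P k = 1 := by
    rw [← map_sum, Lagrange.sum_basis hdist.injOn Finset.univ_nonempty, _root_.map_one]
  -- polynomial identity: (X - λ_k) * basis_k = c • charpoly
  have hannih : ∀ k, (A - lam k • (1 : Matrix (Fin m) (Fin m) ℂ)) * P k = 0 := by
    intro k
    have hbasis : Lagrange.basis Finset.univ lam k =
        C (∏ h ∈ Finset.univ.erase k, (lam k - lam h)⁻¹) *
          ∏ h ∈ Finset.univ.erase k, (X - C (lam h)) := by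
      rw [Lagrange.basis]
      simp only [Lagrange.basisDivisor]
      rw [Finset.prod_mul_distrib, map_prod]
    have hpoly : (X - C (lam k)) * Lagrange.basis Finset.univ lam k =
        C (∏ h ∈ Finset.univ.erase k, (lam k - lam h)⁻¹) * A.charpoly := by
      rw [hbasis, hchar, mul_left_comm,
        Finset.mul_prod_erase Finset.univ (fun h => X - C (lam h)) (Finset.mem_univ k)]
    have := congrArg (aeval A) hpoly
    simp only [_root_.map_mul, map_sub, aeval_X, aeval_C, Matrix.aeval_self_charpoly, mul_zero] at this
    rwa [Algebra.algebraMap_eq_smul_one] at this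
  -- resolvent identity
  have hres : ∀ z : ℂ, (∀ k, z ≠ lam k) →
      (z • (1 : Matrix (Fin m) (Fin m) ℂ) - A)⁻¹ = ∑ k, (z - lam k)⁻¹ • P k := by
    intro z hz
    apply Matrix.inv_eq_right_inv
    rw [Finset.mul_sum]
    have hterm : ∀ k, (z • (1 : Matrix (Fin m) (Fin m) ℂ) - A) * ((z - lam k)⁻¹ • P k) = P k := by
      intro k
      have h1 : (z • (1 : Matrix (Fin m) (Fin m) ℂ) - A) * P k = (z - lam k) • P k := by
        have hdec : z • (1 : Matrix (Fin m) (Fin m) ℂ) - A =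
            (z - lam k) • (1 : Matrix (Fin m) (Fin m) ℂ) - (A - lam k • 1) := by
          rw [sub_smul]; abel
        rw [hdec, sub_mul, hannih, sub_zero, Matrix.smul_mul, one_mul]
      rw [Matrix.mul_smul, h1, smul_smul, inv_mul_cancel₀ (sub_ne_zero.2 (hz k)), one_smul]
    simp_rw [hterm]
    exact hsum
  -- circleMap points avoid eigenvalues
  have hmap : ∀ (θ : ℝ) (k : Fin m), circleMap (lam j) ρ θ - lam k ≠ 0 := by
    intro θ k
    refine sub_ne_zero.2 (hcirc _ ?_ k)
    rw [circleMap_sub_center]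
    simp [abs_of_pos hρ]
  -- rewrite the integrand on the circle
  have hcongr : (∮ z in C(lam j, ρ), (z • (1 : Matrix (Fin m) (Fin m) ℂ) - A)⁻¹) =
      ∮ z in C(lam j, ρ), ∑ k, (z - lam k)⁻¹ • P k := by
    refine circleIntegral.integral_congr hρ.le fun z hz => ?_
    rw [Metric.mem_sphere, Complex.dist_eq] at hz
    exact hres z (hcirc z hz)
  -- split the integral
  have hsplit : (∮ z in C(lam j, ρ), ∑ k, (z - lam k)⁻¹ • P k) =
      ∑ k, (∮ z in C(lam j, ρ), (z - lam k)⁻¹) • P k := by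
    simp only [circleIntegral, Finset.smul_sum]
    rw [intervalIntegral.integral_finset_sum]
    · refine Finset.sum_congr rfl fun k _ => ?_
      simp only [smul_smul, smul_eq_mul]
      rw [intervalIntegral.integral_smul_const]
    · intro k _
      simp only [deriv_circleMap]
      exact ((((continuous_circleMap 0 ρ).mul continuous_const).smul
        ((((continuous_circleMap (lam j) ρ).sub continuous_const).inv₀
          (fun θ => hmap θ k)).smul continuous_const)).intervalIntegrable 0 (2 * Real.pi))
  -- evaluate the scalar integrals
  have hval : ∑ k, (∮ z in C(lam j, ρ), (z - lam k)⁻¹) • P k =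
      (2 * (Real.pi : ℂ) * Complex.I) • P j := by
    rw [Finset.sum_eq_single j]
    · rw [circleIntegral.integral_sub_inv_of_mem_ball (Metric.mem_ball_self hρ)]
    · intro k _ hk
      have hz : (∮ z in C(lam j, ρ), (z - lam k)⁻¹) = 0 := by
        apply Complex.circleIntegral_eq_zero_of_differentiable_on_off_countable hρ.le
          Set.countable_empty
        · refine ContinuousOn.inv₀ (by fun_prop) fun z hz => ?_
          rw [Metric.mem_closedBall, Complex.dist_eq] at hz
          refine sub_ne_zero.2 fun h => ?_
          rw [h] at hz
          exact absurd (hsep k hk) (not_lt.2 hz)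
        · intro z hz
          refine DifferentiableAt.inv (by fun_prop) ?_
          rw [Set.mem_diff, Metric.mem_ball, Complex.dist_eq] at hz
          refine sub_ne_zero.2 fun h => ?_
          have := hsep k hk
          rw [h] at hz
          exact absurd this (not_lt.2 hz.1.le)
      rw [hz, zero_smul]
    · intro h; exact absurd (Finset.mem_univ j) h
  rw [hcongr, hsplit, hval, smul_smul,
    inv_mul_cancel₀ Complex.two_pi_I_ne_zero, one_smul]
  simp [hP, Lagrange.basis, Lagrange.basisDivisor]
end

section
/- Let H be a complex Hilbert space, T > 0, c > 0 and M > 0. Let S, K : [0,T] → B(H) be families of bounded linear operators such that t ↦ S(t) is differentiable in the operator norm with derivative S'(t), and for all t ∈ [0,T]: S(t) is self-adjoint; ⟨S(t)u, u⟩ ≥ c‖u‖² for all u ∈ H; ‖S(t)‖ ≤ M; ‖S'(t)‖ ≤ M; and ‖S(t)K(t) + K(t)*S(t)‖ ≤ M, where K(t)* is the Hilbert adjoint. Let f : [0,T] → H be continuous and let u : [0,T] → H be continuously differentiable with u'(t) = K(t)u(t) + f(t) for all t ∈ [0,T]. Then, with C := 3M, for all t ∈ [0,T]: ‖u(t)‖²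 ≤ c^{-1} ( ⟨S(0)u(0), u(0)⟩ + C ∫₀ᵗ ‖f(s)‖² ds ) · exp(C t / c). -/
open Set ContinuousLinearMap

/-- Energy estimate for a symmetrisable evolution equation `u' = K(t)u + f` on a
complex Hilbert space: if `S(t)` is a self-adjoint positive definite symmetriser
with `‖S‖, ‖S'‖, ‖SK + K*S‖ ≤ M`, then with `C = 3M`,
`‖u(t)‖² ≤ c⁻¹(⟨S(0)u(0),u(0)⟩ + C ∫₀ᵗ ‖f‖²) e^{Ct/c}`. -/
theorem stmt_6 {H : Type*} [NormedAddCommGroup H] [InnerProductSpace ℂ H]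
    [CompleteSpace H]
    (T c M : ℝ) (hT : 0 < T) (hc : 0 < c) (hM : 0 < M)
    (S K S' : ℝ → (H →L[ℂ] H))
    (hSdiff : ∀ t ∈ Icc (0 : ℝ) T, HasDerivWithinAt S (S' t) (Icc (0 : ℝ) T) t)
    (hSsa : ∀ t ∈ Icc (0 : ℝ) T, IsSelfAdjoint (S t))
    (hSpos : ∀ t ∈ Icc (0 : ℝ) T, ∀ u : H, c * ‖u‖ ^ 2 ≤ (inner ℂ ((S t) u) u : ℂ).re)
    (hSbd : ∀ t ∈ Icc (0 : ℝ) T, ‖S t‖ ≤ M)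
    (hS'bd : ∀ t ∈ Icc (0 : ℝ) T, ‖S' t‖ ≤ M)
    (hsym : ∀ t ∈ Icc (0 : ℝ) T,
      ‖(S t).comp (K t) + (ContinuousLinearMap.adjoint (K t)).comp (S t)‖ ≤ M)
    (f u : ℝ → H)
    (hf : ContinuousOn f (Icc (0 : ℝ) T))
    (hu : ∀ t ∈ Icc (0 : ℝ) T, HasDerivWithinAt u ((K t) (u t) + f t) (Icc (0 : ℝ) T) t)
    (hu' : ContinuousOn (fun t => (K t) (u t) + f t) (Icc (0 : ℝ) T)) :
    ∀ t ∈ Icc (0 : ℝ) T,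
      ‖u t‖ ^ 2 ≤
        c⁻¹ * ((inner ℂ ((S 0) (u 0)) (u 0) : ℂ).re +
            (3 * M) * ∫ s in (0 : ℝ)..t, ‖f s‖ ^ 2) *
          Real.exp ((3 * M) * t / c) := by
  intro t ht
  set lam : ℝ := 3 * M / c with hlam
  have hlam_pos : 0 < lam := by positivity
  set E : ℝ → ℝ := fun x => (inner ℂ ((S x) (u x)) (u x) : ℂ).re with hEdef
  set E' : ℝ → ℝ := fun x => (inner ℂ ((S x) (u x)) ((K x) (u x) + f x) +
      inner ℂ ((S' x) (u x) + (S x) ((K x) (u x) + f x)) (u x) : ℂ).re with hE'def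
  -- derivative of the energy
  have hEderiv : ∀ x ∈ Icc (0:ℝ) T, HasDerivWithinAt E (E' x) (Icc (0:ℝ) T) x := by
    intro x hx
    have hSR : HasDerivWithinAt (fun y => (S y).restrictScalars ℝ)
        ((S' x).restrictScalars ℝ) (Icc (0:ℝ) T) x :=
      (restrictScalarsL ℂ H H ℝ ℝ).hasFDerivAt.comp_hasDerivWithinAt x (hSdiff x hx)
    have hA : HasDerivWithinAt (fun y => ((S y).restrictScalars ℝ) (u y))
        (((S' x).restrictScalars ℝ) (u x) + ((S x).restrictScalars ℝ) ((K x) (u x) + f x))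
        (Icc (0:ℝ) T) x := hSR.clm_apply (hu x hx)
    have h2 := hA.inner ℂ (hu x hx)
    have h3 := (Complex.reCLM.hasFDerivAt.comp_hasDerivWithinAt x h2)
    have h4 : HasDerivWithinAt (fun y => (inner ℂ ((S y) (u y)) (u y) : ℂ).re)
        ((inner ℂ ((S x) (u x)) ((K x) (u x) + f x) +
          inner ℂ ((S' x) (u x) + (S x) ((K x) (u x) + f x)) (u x) : ℂ)).re (Icc (0:ℝ) T) x := by
      convert h3 using 1
      all_goals rfl
    exact h4
  -- key differential inequality
  have key : ∀ x ∈ Icc (0:ℝ) T, E' x ≤ lam * E x + 3 * M * ‖f x‖ ^ 2 := by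
    intro x hx
    set v := u x with hv
    set w := f x with hw
    have hbd1 : (inner ℂ ((S' x) v) v : ℂ).re ≤ M * ‖v‖ ^ 2 := by
      calc (inner ℂ ((S' x) v) v : ℂ).re ≤ ‖(inner ℂ ((S' x) v) v : ℂ)‖ :=
            Complex.re_le_norm _
        _ ≤ ‖(S' x) v‖ * ‖v‖ := norm_inner_le_norm _ _
        _ ≤ (‖S' x‖ * ‖v‖) * ‖v‖ := by
            gcongr; exact (S' x).le_opNorm v
        _ ≤ (M * ‖v‖) * ‖v‖ := by gcongr; exact hS'bd x hx
        _ = M * ‖v‖ ^ 2 := by ring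
    have hbd2 : (inner ℂ (((S x).comp (K x) + (ContinuousLinearMap.adjoint (K x)).comp (S x)) v) v
        : ℂ).re ≤ M * ‖v‖ ^ 2 := by
      set A := (S x).comp (K x) + (ContinuousLinearMap.adjoint (K x)).comp (S x) with hA
      calc (inner ℂ (A v) v : ℂ).re ≤ ‖(inner ℂ (A v) v : ℂ)‖ := Complex.re_le_norm _
        _ ≤ ‖A v‖ * ‖v‖ := norm_inner_le_norm _ _
        _ ≤ (‖A‖ * ‖v‖) * ‖v‖ := by gcongr; exact A.le_opNorm v
        _ ≤ (M * ‖v‖) * ‖v‖ := by gcongr; exact hsym x hx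
        _ = M * ‖v‖ ^ 2 := by ring
    have hbd3 : 2 * (inner ℂ ((S x) v) w : ℂ).re ≤ M * ‖v‖ ^ 2 + M * ‖w‖ ^ 2 := by
      have h1 : (inner ℂ ((S x) v) w : ℂ).re ≤ M * (‖v‖ * ‖w‖) := by
        calc (inner ℂ ((S x) v) w : ℂ).re ≤ ‖(inner ℂ ((S x) v) w : ℂ)‖ := Complex.re_le_norm _
          _ ≤ ‖(S x) v‖ * ‖w‖ := norm_inner_le_norm _ _
          _ ≤ (‖S x‖ * ‖v‖) * ‖w‖ := by gcongr; exact (S x).le_opNorm v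
          _ ≤ (M * ‖v‖) * ‖w‖ := by gcongr; exact hSbd x hx
          _ = M * (‖v‖ * ‖w‖) := by ring
      nlinarith [sq_nonneg (‖v‖ - ‖w‖), hM.le]
    -- rewrite E' x
    have hsa := (ContinuousLinearMap.isSelfAdjoint_iff_isSymmetric.mp (hSsa x hx))
    have hsw : (inner ℂ ((S x) w) v : ℂ).re = (inner ℂ ((S x) v) w : ℂ).re := by
      have h5 : (inner ℂ ((S x) w) v : ℂ) = inner ℂ w ((S x) v) := by
        conv_lhs => rw [← (hSsa x hx).adjoint_eq]
        exact ContinuousLinearMap.adjoint_inner_left _ _ _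
      rw [h5, ← inner_conj_symm, Complex.conj_re]
    have hadj : (inner ℂ ((S x) v) ((K x) v) : ℂ) =
        (inner ℂ ((ContinuousLinearMap.adjoint (K x)) ((S x) v)) v : ℂ) :=
      (ContinuousLinearMap.adjoint_inner_left (K x) v ((S x) v)).symm
    have hsplit : E' x =
        (inner ℂ (((S x).comp (K x) + (ContinuousLinearMap.adjoint (K x)).comp (S x)) v) v : ℂ).re
        + (inner ℂ ((S' x) v) v : ℂ).re + 2 * (inner ℂ ((S x) v) w : ℂ).re := by
      simp only [hE'def, ← hv, ← hw, inner_add_right, inner_add_left, map_add,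
        ContinuousLinearMap.add_apply, ContinuousLinearMap.comp_apply, Complex.add_re]
      rw [hadj] at *
      linarith [hsw]
    have hpos := hSpos x hx v
    have hEge : lam * E x ≥ 3 * M * ‖v‖ ^ 2 := by
      have : lam * (c * ‖v‖ ^ 2) ≤ lam * E x := by
        apply mul_le_mul_of_nonneg_left _ hlam_pos.le
        simpa [hEdef] using hpos
      calc 3 * M * ‖v‖ ^ 2 = lam * (c * ‖v‖ ^ 2) := by rw [hlam]; field_simp
        _ ≤ lam * E x := this
      
    have : E' x ≤ 3 * M * ‖v‖ ^ 2 + M * ‖w‖ ^ 2 := by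
      rw [hsplit]; linarith
    nlinarith [sq_nonneg ‖w‖, hM.le]
  -- continuity of E
  have hEcont : ContinuousOn E (Icc (0:ℝ) T) :=
    fun x hx => (hEderiv x hx).continuousWithinAt
  -- the weight function g
  set g : ℝ → ℝ := fun s => Real.exp (-lam * s) * ‖f s‖ ^ 2 with hg
  have hgcont : ContinuousOn g (Icc (0:ℝ) T) := by
    apply ContinuousOn.mul
    · exact (Real.continuous_exp.comp (continuous_const.mul continuous_id)).continuousOn
    · exact (hf.norm).pow 2
  set P : ℝ → ℝ := fun x => ∫ s in (0:ℝ)..x, g s with hP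
  set φ : ℝ → ℝ := fun x => Real.exp (-lam * x) * E x - 3 * M * P x with hφ
  -- derivative of φ at interior points, nonpositive
  have hIccT : Icc (0:ℝ) t ⊆ Icc (0:ℝ) T := Icc_subset_Icc le_rfl ht.2
  have hφderiv : ∀ x ∈ Ioo (0:ℝ) t, HasDerivWithinAt φ
      ((-lam * Real.exp (-lam * x)) * E x + Real.exp (-lam * x) * E' x - 3 * M * g x)
      (Ioi x) x := by
    intro x hx
    have hxT : x ∈ Icc (0:ℝ) T := ⟨hx.1.le, hx.2.le.trans ht.2⟩
    have hxmem : Icc (0:ℝ) T ∈ nhds x := Icc_mem_nhds hx.1 (hx.2.trans_le ht.2)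
    have hE_at : HasDerivAt E (E' x) x := (hEderiv x hxT).hasDerivAt hxmem
    have hexp : HasDerivAt (fun y => Real.exp (-lam * y)) (-lam * Real.exp (-lam * x)) x := by
      have h1 : HasDerivAt (fun y : ℝ => -lam * y) (-lam) x := by
        simpa using (hasDerivAt_id x).const_mul (-lam)
      simpa [mul_comm] using h1.exp
    have hPint : IntervalIntegrable g MeasureTheory.volume 0 x :=
      (hgcont.mono (Icc_subset_Icc le_rfl hxT.2)).intervalIntegrable_of_Icc hxT.1
    have hmeas : StronglyMeasurableAtFilter g (nhds x) :=
      ⟨Icc (0:ℝ) T, hxmem, hgcont.aestronglyMeasurable measurableSet_Icc⟩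
    have hPd : HasDerivAt P (g x) x :=
      intervalIntegral.integral_hasDerivAt_right hPint hmeas
        (hgcont.continuousAt hxmem)
    exact ((hexp.mul hE_at).sub ((hPd.const_mul (3*M)))).hasDerivWithinAt
  have hφ'le : ∀ x ∈ Ioo (0:ℝ) t,
      (-lam * Real.exp (-lam * x)) * E x + Real.exp (-lam * x) * E' x - 3 * M * g x ≤ 0 := by
    intro x hx
    have hxT : x ∈ Icc (0:ℝ) T := ⟨hx.1.le, hx.2.le.trans ht.2⟩
    have hk := key x hxT
    have he := Real.exp_pos (-lam * x)
    have : Real.exp (-lam * x) * E' x ≤ Real.exp (-lam * x) * (lam * E x + 3 * M * ‖f x‖ ^ 2) :=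
      mul_le_mul_of_nonneg_left hk he.le
    simp only [hg]
    nlinarith
  -- continuity of φ on [0,t]
  have hφcont : ContinuousOn φ (Icc (0:ℝ) t) := by
    apply ContinuousOn.sub
    · exact (((Real.continuous_exp.comp (continuous_const.mul continuous_id)).continuousOn).mul
        (hEcont.mono hIccT))
    · apply ContinuousOn.mul continuousOn_const
      have : MeasureTheory.IntegrableOn g (uIcc (0:ℝ) t) MeasureTheory.volume := by
        rw [uIcc_of_le ht.1]
        exact (hgcont.mono hIccT).integrableOn_compact isCompact_Icc
      have := intervalIntegral.continuousOn_primitive_interval this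
      simpa [uIcc_of_le ht.1] using this
  -- Gronwall-type conclusion: φ t ≤ φ 0
  have hmono : φ t - φ 0 ≤ ∫ y in (0:ℝ)..t, (0:ℝ) := by
    apply intervalIntegral.sub_le_integral_of_hasDeriv_right_of_le ht.1 hφcont hφderiv
    · exact MeasureTheory.integrableOn_const measure_Icc_lt_top.ne
    · intro x hx; exact hφ'le x hx
  have hφt : φ t ≤ E 0 := by
    have h0 : φ 0 = E 0 := by simp [hφ, hP]
    have h1 : φ t ≤ φ 0 := by
      have := hmono; simp only [intervalIntegral.integral_zero] at this; linarith
    linarith [h0.le, h1]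
  -- compare with integral of ‖f‖²
  have hPle : P t ≤ ∫ s in (0:ℝ)..t, ‖f s‖ ^ 2 := by
    apply intervalIntegral.integral_mono_on ht.1
    · exact (hgcont.mono hIccT).intervalIntegrable_of_Icc ht.1
    · exact (((hf.mono hIccT).norm).pow 2).intervalIntegrable_of_Icc ht.1
    · intro s hs
      have h1 : Real.exp (-lam * s) ≤ 1 := by
        rw [Real.exp_le_one_iff]
        nlinarith [hs.1, hlam_pos]
      have := sq_nonneg ‖f s‖
      calc g s = Real.exp (-lam * s) * ‖f s‖ ^ 2 := rfl
        _ ≤ 1 * ‖f s‖ ^ 2 := by gcongr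
        _ = ‖f s‖ ^ 2 := one_mul _
  set B : ℝ := (inner ℂ ((S 0) (u 0)) (u 0) : ℂ).re + 3 * M * ∫ s in (0:ℝ)..t, ‖f s‖ ^ 2 with hB
  have hEt : Real.exp (-lam * t) * E t ≤ B := by
    have : φ t = Real.exp (-lam * t) * E t - 3 * M * P t := rfl
    have h1 : Real.exp (-lam * t) * E t ≤ E 0 + 3 * M * P t := by
      have := hφt; simp only [hφ] at this; linarith
    have h2 : 3 * M * P t ≤ 3 * M * ∫ s in (0:ℝ)..t, ‖f s‖ ^ 2 := by
      apply mul_le_mul_of_nonneg_left hPle (by positivity)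
    simp only [hB, hEdef]; linarith
  have hexp1 : Real.exp (-lam * t) * Real.exp (lam * t) = 1 := by
    rw [← Real.exp_add]; ring_nf; exact Real.exp_zero
  have hEt2 : E t ≤ B * Real.exp (lam * t) := by
    have := mul_le_mul_of_nonneg_right hEt (Real.exp_pos (lam * t)).le
    calc E t = (Real.exp (-lam * t) * Real.exp (lam * t)) * E t := by rw [hexp1]; ring
      _ = (Real.exp (-lam * t) * E t) * Real.exp (lam * t) := by ring
      _ ≤ B * Real.exp (lam * t) := this
  have hpos := hSpos t ht (u t)
  have hfinal : c * ‖u t‖ ^ 2 ≤ B * Real.exp (lam * t) := le_trans (by simpa [hEdef] using hpos) hEt2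
  have hexp_eq : Real.exp (lam * t) = Real.exp ((3 * M) * t / c) := by
    congr 1; rw [hlam]; ring
  rw [← hexp_eq]
  calc ‖u t‖ ^ 2 = c⁻¹ * (c * ‖u t‖ ^ 2) := by field_simp
    _ ≤ c⁻¹ * (B * Real.exp (lam * t)) :=
        mul_le_mul_of_nonneg_left hfinal (inv_nonneg.mpr hc.le)
    _ = c⁻¹ * B * Real.exp (lam * t) := by ring
end
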